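/- Let β⁺,β⁻:[0,1]³→[0,∞) be measurable with β⁺,β⁻ ∈ L¹([0,1]³) and β⁺,β⁻ ≥ c_β > 0 a.e. for some constant c_β. For φ ∈ W₀, let U(φ) be the set of pairs of measurable functions α⁺,α⁻:[0,1]³→[0,∞) such that α⁺β⁺(1−φ) = α⁻β⁻φ almost everywhere on [0,1]³. Then inf over (α⁺,α⁻) ∈ U(φ) of ∫_{[0,1]³} [ ℓ(α⁺)β⁺(1−φ) + ℓ(α⁻)β⁻φ ] equals J^{(β⁺,β⁻)}(φ). -/

import Mathlib

open MeasureTheory Filter Set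
open scoped ENNReal

noncomputable section

/-- The unit interval `[0,1]` as a subset of `ℝ`. -/
def I01 : Set ℝ := Set.Icc 0 1

/-- The unit cube `[0,1]³`. -/
def cube3 : Set (ℝ × ℝ × ℝ) := I01 ×ˢ I01 ×ˢ I01

/-- Membership in `W₀`: a measurable function `[0,1]³ → [0,1]`. -/
def MemW0 (φ : ℝ × ℝ × ℝ → ℝ) : Prop :=
  Measurable φ ∧ ∀ p ∈ cube3, φ p ∈ Set.Icc (0:ℝ) 1

/-- The rate function
`J^{(β⁺,β⁻)}(φ) = ∫_{[0,1]³} (√(β⁺(1−φ)) − √(β⁻φ))²`. -/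
def Jfun (βp βm φ : ℝ × ℝ × ℝ → ℝ) : ℝ :=
  ∫ p in cube3, (Real.sqrt (βp p * (1 - φ p)) - Real.sqrt (βm p * φ p)) ^ 2

/-- `ℓ(x) = x log x − x + 1` (so that `ℓ(0) = 1`, since `Real.log 0 = 0`). -/
def ell (x : ℝ) : ℝ := x * Real.log x - x + 1

/-- **Lemma (control representation of the rate function).**
For measurable `β⁺, β⁻ ∈ L¹([0,1]³)` bounded below by `c_β > 0` a.e. and `φ ∈ W₀`,
the infimum of `∫ [ℓ(α⁺)β⁺(1−φ) + ℓ(α⁻)β⁻φ]` over measurable nonnegative pairs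
`(α⁺, α⁻)` with `α⁺β⁺(1−φ) = α⁻β⁻φ` a.e. equals `J^{(β⁺,β⁻)}(φ)`. -/

lemma mlogc (m c : ℝ) (hm : 0 < m) (hc : 0 < c) :
    m - c ≤ m * (Real.log m - Real.log c) := by
  have h := Real.log_le_sub_one_of_pos (show 0 < c / m by positivity)
  rw [Real.log_div hc.ne' hm.ne'] at h
  have h2 := mul_le_mul_of_nonneg_left h hm.le
  have : m * (c / m) = c := by field_simp
  nlinarith

lemma key_ineq (A B a b : ℝ) (hA : 0 ≤ A) (hB : 0 ≤ B) (ha : 0 ≤ a) (hb : 0 ≤ b)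
    (hc : a * A = b * B) :
    (Real.sqrt A - Real.sqrt B) ^ 2 ≤ ell a * A + ell b * B := by
  have hsA : Real.sqrt A ^ 2 = A := Real.sq_sqrt hA
  have hsB : Real.sqrt B ^ 2 = B := Real.sq_sqrt hB
  rcases hA.eq_or_lt with hA0 | hA0
  · rcases hB.eq_or_lt with hB0 | hB0
    · simp [← hA0, ← hB0, ell]
    · have hb0 : b = 0 := by
        have : b * B = 0 := by rw [← hc, ← hA0]; ring
        rcases mul_eq_zero.1 this with h | h
        · exact h
        · exact absurd h hB0.ne'
      simp [← hA0, hb0, ell, Real.sqrt_zero, hsB]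
  · rcases hB.eq_or_lt with hB0 | hB0
    · have ha0 : a = 0 := by
        have : a * A = 0 := by rw [hc, ← hB0]; ring
        rcases mul_eq_zero.1 this with h | h
        · exact h
        · exact absurd h hA0.ne'
      simp [← hB0, ha0, ell, Real.sqrt_zero]
      nlinarith [hsA]
    · -- A > 0, B > 0
      have hsApos : 0 < Real.sqrt A := Real.sqrt_pos.2 hA0
      have hsBpos : 0 < Real.sqrt B := Real.sqrt_pos.2 hB0
      rcases ha.eq_or_lt with ha0 | ha0
      · have hb0 : b = 0 := by
          have : b * B = 0 := by rw [← hc, ← ha0]; ring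
          rcases mul_eq_zero.1 this with h | h
          · exact h
          · exact absurd h hB0.ne'
        simp [← ha0, hb0, ell]
        nlinarith [hsA, hsB, mul_pos hsApos hsBpos]
      · have hbpos : 0 < b := by
          rcases hb.eq_or_lt with hb0 | hb0
          · exfalso
            have : a * A = 0 := by rw [hc, ← hb0]; ring
            rcases mul_eq_zero.1 this with h | h
            · exact absurd h ha0.ne'
            · exact absurd h hA0.ne'
          · exact hb0
        set m := a * A with hm
        have hmpos : 0 < m := mul_pos ha0 hA0
        set c := Real.sqrt A * Real.sqrt B with hcdef
        have hcpos : 0 < c := mul_pos hsApos hsBpos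
        -- log a + log b = 2 * (log m - log c)
        have hla : Real.log a = Real.log m - Real.log A := by
          rw [hm, Real.log_mul ha0.ne' hA0.ne']; ring
        have hlb : Real.log b = Real.log m - Real.log B := by
          have hbm : b = m / B := (eq_div_iff hB0.ne').2 hc.symm
          rw [hbm, Real.log_div hmpos.ne' hB0.ne']
        have hlogc : Real.log A + Real.log B = 2 * Real.log c := by
          rw [hcdef, Real.log_mul hsApos.ne' hsBpos.ne',
            Real.log_sqrt hA, Real.log_sqrt hB]; ring
        have hkey := mlogc m c hmpos hcpos
        have hbB : b * B = m := hc.symm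
        have hc2 : c ^ 2 = A * B := by rw [hcdef]; nlinarith [hsA, hsB]
        unfold ell
        have expand : (a * Real.log a - a + 1) * A + (b * Real.log b - b + 1) * B
            = m * (Real.log a + Real.log b) - 2 * m + A + B := by
          have h1 : a * Real.log a * A = m * Real.log a := by rw [hm]; ring
          have h2 : b * Real.log b * B = m * Real.log b := by rw [← hbB]; ring
          nlinarith [h1, h2, hm, hbB]
        rw [expand, hla, hlb]
        nlinarith [hkey, hsA, hsB, hlogc]

lemma key_eq (A B : ℝ) (hA : 0 ≤ A) (hB : 0 ≤ B) :
    ell (Real.sqrt (B / A)) * A + ell (Real.sqrt (A / B)) * B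
      = (Real.sqrt A - Real.sqrt B) ^ 2 := by
  have hsA : Real.sqrt A ^ 2 = A := Real.sq_sqrt hA
  have hsB : Real.sqrt B ^ 2 = B := Real.sq_sqrt hB
  rcases hA.eq_or_lt with hA0 | hA0
  · simp [← hA0, div_zero, Real.sqrt_zero, ell]
    nlinarith [hsB]
  · rcases hB.eq_or_lt with hB0 | hB0
    · simp [← hB0, div_zero, Real.sqrt_zero, ell]
      nlinarith [hsA]
    · have hsApos : 0 < Real.sqrt A := Real.sqrt_pos.2 hA0
      have hsBpos : 0 < Real.sqrt B := Real.sqrt_pos.2 hB0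
      have ha : Real.sqrt (B / A) = Real.sqrt B / Real.sqrt A := Real.sqrt_div hB A
      have hb : Real.sqrt (A / B) = Real.sqrt A / Real.sqrt B := Real.sqrt_div hA B
      have hla : Real.log (Real.sqrt B / Real.sqrt A)
          = Real.log (Real.sqrt B) - Real.log (Real.sqrt A) :=
        Real.log_div hsBpos.ne' hsApos.ne'
      have hlb : Real.log (Real.sqrt A / Real.sqrt B)
          = Real.log (Real.sqrt A) - Real.log (Real.sqrt B) :=
        Real.log_div hsApos.ne' hsBpos.ne'
      rw [ha, hb]
      unfold ell
      rw [hla, hlb]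
      have h1 : Real.sqrt B / Real.sqrt A * A = Real.sqrt B * Real.sqrt A := by
        field_simp
        linear_combination -hsA
      have h2 : Real.sqrt A / Real.sqrt B * B = Real.sqrt A * Real.sqrt B := by
        field_simp
        linear_combination -hsB
      linear_combination ((Real.log (Real.sqrt B) - Real.log (Real.sqrt A)) - 1) * h1
        + (-(Real.log (Real.sqrt B) - Real.log (Real.sqrt A)) - 1) * h2 - hsA - hsB

lemma opt_constraint (A B : ℝ) (hA : 0 ≤ A) (hB : 0 ≤ B) :
    Real.sqrt (B / A) * A = Real.sqrt (A / B) * B := by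
  rcases hA.eq_or_lt with hA0 | hA0
  · simp [← hA0, div_zero]
  · rcases hB.eq_or_lt with hB0 | hB0
    · simp [← hB0, div_zero]
    · rw [Real.sqrt_div hB A, Real.sqrt_div hA B]
      have hsA : Real.sqrt A ^ 2 = A := Real.sq_sqrt hA
      have hsB : Real.sqrt B ^ 2 = B := Real.sq_sqrt hB
      have hsApos : 0 < Real.sqrt A := Real.sqrt_pos.2 hA0
      have hsBpos : 0 < Real.sqrt B := Real.sqrt_pos.2 hB0
      field_simp
      nlinarith [hsA, hsB]

theorem control_representation_of_rate
    (βp βm : ℝ × ℝ × ℝ → ℝ)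
    (hβp_meas : Measurable βp) (hβm_meas : Measurable βm)
    (hβp_int : IntegrableOn βp cube3) (hβm_int : IntegrableOn βm cube3)
    (cβ : ℝ) (hcβ : 0 < cβ)
    (hβ_lb : ∀ᵐ p ∂(volume.restrict cube3), cβ ≤ βp p ∧ cβ ≤ βm p)
    (hβp_nonneg : ∀ p, 0 ≤ βp p) (hβm_nonneg : ∀ p, 0 ≤ βm p)
    (φ : ℝ × ℝ × ℝ → ℝ) (hφ : MemW0 φ) :
    ⨅ (α : (ℝ × ℝ × ℝ → ℝ) × (ℝ × ℝ × ℝ → ℝ))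
      (_ : Measurable α.1 ∧ Measurable α.2 ∧ (∀ p, 0 ≤ α.1 p) ∧ (∀ p, 0 ≤ α.2 p) ∧
        (∀ᵐ p ∂(volume.restrict cube3),
          α.1 p * (βp p * (1 - φ p)) = α.2 p * (βm p * φ p))),
      ∫⁻ p in cube3,
        ENNReal.ofReal (ell (α.1 p) * (βp p * (1 - φ p)) + ell (α.2 p) * (βm p * φ p))
      = ENNReal.ofReal (Jfun βp βm φ) := by
  obtain ⟨hφ_meas, hφ_mem⟩ := hφ
  have hcube_meas : MeasurableSet cube3 :=
    measurableSet_Icc.prod (measurableSet_Icc.prod measurableSet_Icc)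
  set A : ℝ × ℝ × ℝ → ℝ := fun p => βp p * (1 - φ p) with hAdef
  set B : ℝ × ℝ × ℝ → ℝ := fun p => βm p * φ p with hBdef
  have hA_meas : Measurable A := hβp_meas.mul (measurable_const.sub hφ_meas)
  have hB_meas : Measurable B := hβm_meas.mul hφ_meas
  have hmem : ∀ᵐ p ∂(volume.restrict cube3), p ∈ cube3 := ae_restrict_mem hcube_meas
  have hAB : ∀ᵐ p ∂(volume.restrict cube3), 0 ≤ A p ∧ 0 ≤ B p := by
    filter_upwards [hmem] with p hp
    obtain ⟨h0, h1⟩ := hφ_mem p hp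
    exact ⟨mul_nonneg (hβp_nonneg p) (by linarith), mul_nonneg (hβm_nonneg p) h0⟩
  have hf_meas : Measurable fun p => (Real.sqrt (A p) - Real.sqrt (B p)) ^ 2 :=
    ((Real.continuous_sqrt.measurable.comp hA_meas).sub
      (Real.continuous_sqrt.measurable.comp hB_meas)).pow_const 2
  have hf_int : IntegrableOn (fun p => (Real.sqrt (A p) - Real.sqrt (B p)) ^ 2) cube3 := by
    refine Integrable.mono' (hβp_int.add hβm_int) hf_meas.aestronglyMeasurable ?_
    filter_upwards [hmem] with p hp
    obtain ⟨h0, h1⟩ := hφ_mem p hp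
    have hA0 : 0 ≤ A p := mul_nonneg (hβp_nonneg p) (by linarith : (0:ℝ) ≤ 1 - φ p)
    have hB0 : 0 ≤ B p := mul_nonneg (hβm_nonneg p) h0
    have hsA : Real.sqrt (A p) ^ 2 = A p := Real.sq_sqrt hA0
    have hsB : Real.sqrt (B p) ^ 2 = B p := Real.sq_sqrt hB0
    rw [Real.norm_eq_abs, abs_of_nonneg (sq_nonneg _)]
    simp only [Pi.add_apply]
    have hAle : A p ≤ βp p := by
      have := mul_nonneg (hβp_nonneg p) h0
      simp only [hAdef]; nlinarith
    have hBle : B p ≤ βm p := by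
      have := mul_nonneg (hβm_nonneg p) (by linarith : (0:ℝ) ≤ 1 - φ p)
      simp only [hBdef]; nlinarith
    nlinarith [hsA, hsB, mul_nonneg (Real.sqrt_nonneg (A p)) (Real.sqrt_nonneg (B p))]
  have hJ : ENNReal.ofReal (Jfun βp βm φ)
      = ∫⁻ p in cube3, ENNReal.ofReal ((Real.sqrt (A p) - Real.sqrt (B p)) ^ 2) := by
    unfold Jfun
    exact ofReal_integral_eq_lintegral_ofReal hf_int (ae_of_all _ fun p => sq_nonneg _)
  refine le_antisymm ?_ ?_
  · refine iInf_le_of_le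
      (fun p => Real.sqrt (B p / A p), fun p => Real.sqrt (A p / B p)) ?_
    refine iInf_le_of_le ⟨?_, ?_, ?_, ?_, ?_⟩ (le_of_eq ?_)
    · exact Real.continuous_sqrt.measurable.comp (hB_meas.div hA_meas)
    · exact Real.continuous_sqrt.measurable.comp (hA_meas.div hB_meas)
    · exact fun p => Real.sqrt_nonneg _
    · exact fun p => Real.sqrt_nonneg _
    · filter_upwards [hAB] with p hp
      exact opt_constraint (A p) (B p) hp.1 hp.2
    · rw [hJ]
      refine lintegral_congr_ae ?_
      filter_upwards [hAB] with p hp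
      rw [key_eq (A p) (B p) hp.1 hp.2]
  · refine le_iInf fun α => le_iInf fun hα => ?_
    rw [hJ]
    refine lintegral_mono_ae ?_
    filter_upwards [hAB, hα.2.2.2.2] with p hp hcp
    exact ENNReal.ofReal_le_ofReal
      (key_ineq (A p) (B p) (α.1 p) (α.2 p) hp.1 hp.2 (hα.2.2.1 p) (hα.2.2.2.1 p) hcp)
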